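/- Let X be a metric measure space, Ω ⊆ X open, 1 ≤ p < ∞, and assume that every function in N^{1,p}(Ω) is quasicontinuous in Ω (with respect to the capacity Cp(·;Ω)). Then bCp(·;Ω) is an outer capacity, i.e. for every E ⊆ clΩ, bCp(E;Ω) = inf{bCp(G;Ω) : G ⊇ E, G relatively open in clΩ}. -/

import Mathlib

open Set MeasureTheory Filter ENNReal NNReal Metric Topology

noncomputable section

/-- Extended absolute value of the "difference" of two extended reals; with Mathlib's
`EReal` subtraction conventions, `erealAbs (a - b) = ∞` whenever both `a` and `b`
are infinite, matching the convention for the upper gradient inequality. -/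
def erealAbs (a : EReal) : ℝ≥0∞ :=
  if a = ⊤ ∨ a = ⊥ then ⊤ else ENNReal.ofReal |a.toReal|

/-- Variation of `γ` over `[a,b]` computed with respect to an arbitrary
distance-like function `ρ`, as a supremum over partitions
`a = t 0 ≤ t 1 ≤ ⋯ ≤ t n = b`. -/
def variationWith {Y : Type*} (ρ : Y → Y → ℝ≥0∞) (γ : ℝ → Y) (a b : ℝ) : ℝ≥0∞ :=
  ⨆ P ∈ {P : ℕ × (ℕ → ℝ) |
      Monotone P.2 ∧ (∀ i, P.2 i ∈ Set.Icc a b) ∧ P.2 0 = a ∧ P.2 P.1 = b},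
    ∑ i ∈ Finset.range P.1, ρ (γ (P.2 i)) (γ (P.2 (i + 1)))

/-- `γ : [0,L] → Y` is parameterized by arc length with respect to `ρ`. -/
def IsArcLengthParamWith {Y : Type*} (ρ : Y → Y → ℝ≥0∞) (γ : ℝ → Y) (L : ℝ) : Prop :=
  ∀ s t : ℝ, s ∈ Set.Icc 0 L → t ∈ Set.Icc 0 L → s ≤ t →
    variationWith ρ γ s t = ENNReal.ofReal (t - s)

/-- `g` is an upper gradient of `f` on `S` with respect to the distance `ρ`:
for every (nonconstant, compact, rectifiable) curve in `S` parameterized by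
arc length, the upper gradient inequality holds. -/
def IsUpperGradientWith {Y : Type*} (ρ : Y → Y → ℝ≥0∞) (S : Set Y)
    (g : Y → ℝ≥0∞) (f : Y → EReal) : Prop :=
  ∀ (γ : ℝ → Y) (L : ℝ), 0 < L → Set.MapsTo γ (Set.Icc 0 L) S →
    IsArcLengthParamWith ρ γ L →
    erealAbs (f (γ L) - f (γ 0)) ≤ ∫⁻ t in Set.Icc 0 L, g (γ t)

/-- Upper gradient on `S` with respect to the ambient metric. -/
def IsUpperGradientOn {Y : Type*} [PseudoEMetricSpace Y] (S : Set Y)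
    (g : Y → ℝ≥0∞) (f : Y → EReal) : Prop :=
  IsUpperGradientWith (fun x y => edist x y) S g f

/-- The `p`-th power of the Newtonian norm of `f` on `S` with respect to the
measure `m` and the distance `ρ`:
`∫_S |f|^p dm + inf {∫_S g^p dm : g a Borel upper gradient of f on S w.r.t. ρ}`. -/
def npEnergyWith {Y : Type*} [MeasurableSpace Y] (m : Measure Y) (p : ℝ)
    (ρ : Y → Y → ℝ≥0∞) (S : Set Y) (f : Y → ℝ) : ℝ≥0∞ :=
  (∫⁻ y in S, ENNReal.ofReal |f y| ^ p ∂m) +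
    ⨅ g ∈ {g : Y → ℝ≥0∞ | Measurable g ∧
        IsUpperGradientWith ρ S g (fun y => (f y : EReal))},
      ∫⁻ y in S, g y ^ p ∂m

/-- The `p`-th power of the Newtonian norm of `f` on `S ⊆ Y` (w.r.t. the ambient metric). -/
def npEnergyOn {Y : Type*} [PseudoEMetricSpace Y] [MeasurableSpace Y]
    (m : Measure Y) (p : ℝ) (S : Set Y) (f : Y → ℝ) : ℝ≥0∞ :=
  npEnergyWith m p (fun x y => edist x y) S f

/-- `f ∈ N^{1,p}(S, m)`. -/
def MemNp {Y : Type*} [PseudoEMetricSpace Y] [MeasurableSpace Y]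
    (m : Measure Y) (p : ℝ) (S : Set Y) (f : Y → ℝ) : Prop :=
  Measurable f ∧ npEnergyOn m p S f ≠ ⊤

/-- The Sobolev capacity `C_p(E; S)` of `E ⊆ S`. -/
def CpOn {Y : Type*} [PseudoEMetricSpace Y] [MeasurableSpace Y]
    (m : Measure Y) (p : ℝ) (S E : Set Y) : ℝ≥0∞ :=
  ⨅ u ∈ {u : Y → ℝ | MemNp m p S u ∧ ∀ x ∈ E, u x = 1}, npEnergyOn m p S u

/-- The capacity `bC_p(E; S)` of `E ⊆ closure S`. -/
def bCpOn {Y : Type*} [PseudoEMetricSpace Y] [MeasurableSpace Y]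
    (m : Measure Y) (p : ℝ) (S E : Set Y) : ℝ≥0∞ :=
  ⨅ u ∈ {u : Y → ℝ | MemNp m p S u ∧ (∀ x ∈ E ∩ S, 1 ≤ u x) ∧
      ∀ x ∈ E ∩ (closure S \ S),
        (1 : EReal) ≤ Filter.liminf (fun y => (u y : EReal)) (nhdsWithin x S)},
    npEnergyOn m p S u

/-- The Mazurkiewicz distance on `S`. -/
def mazDist {Y : Type*} [PseudoEMetricSpace Y] (S : Set Y) (x y : Y) : ℝ≥0∞ :=
  ⨅ E ∈ {E : Set Y | E ⊆ S ∧ IsConnected E ∧ x ∈ E ∧ y ∈ E}, EMetric.diam E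

/-- The inner metric on `S`: the infimum of lengths of curves in `S` joining
`x` and `y` (`∞` if there are none). -/
def innerDist {Y : Type*} [PseudoEMetricSpace Y] (S : Set Y) (x y : Y) : ℝ≥0∞ :=
  ⨅ c ∈ {c : (ℝ → Y) × ℝ × ℝ | c.2.1 ≤ c.2.2 ∧
      ContinuousOn c.1 (Set.Icc c.2.1 c.2.2) ∧
      Set.MapsTo c.1 (Set.Icc c.2.1 c.2.2) S ∧ c.1 c.2.1 = x ∧ c.1 c.2.2 = y},
    eVariationOn c.1 (Set.Icc c.2.1 c.2.2)

/-- `S` is `L`-quasiconvex: any two points of `S` can be joined by a curve in `S`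
of length at most `L` times their distance. -/
def LQuasiconvexOn {Y : Type*} [PseudoMetricSpace Y] (S : Set Y) (L : ℝ) : Prop :=
  ∀ x ∈ S, ∀ y ∈ S, ∃ (γ : ℝ → Y) (a b : ℝ), a ≤ b ∧
    ContinuousOn γ (Set.Icc a b) ∧ Set.MapsTo γ (Set.Icc a b) S ∧
    γ a = x ∧ γ b = y ∧ eVariationOn γ (Set.Icc a b) ≤ ENNReal.ofReal (L * dist x y)

/-- A quasiconvex metric space. -/
def QuasiconvexSpace (Y : Type*) [PseudoMetricSpace Y] : Prop :=
  ∃ L : ℝ, 1 ≤ L ∧ LQuasiconvexOn (Set.univ : Set Y) L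

/-- A bounded domain: a bounded nonempty open connected set. -/
def IsBoundedDomain {Y : Type*} [PseudoMetricSpace Y] (Ω : Set Y) : Prop :=
  IsOpen Ω ∧ IsConnected Ω ∧ Bornology.IsBounded Ω

/-- `Ω` is finitely connected at the boundary. -/
def FinConnAtBoundary {Y : Type*} [MetricSpace Y] (Ω : Set Y) : Prop :=
  ∀ x₀ ∈ frontier Ω, ∀ r : ℝ, 0 < r → ∃ G : Set Y, IsOpen G ∧ x₀ ∈ G ∧
    G ⊆ Metric.ball x₀ r ∧
    {C : Set Y | ∃ x ∈ G ∩ Ω, C = connectedComponentIn (G ∩ Ω) x}.Finite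

/-- The standing assumption on the measure: every ball has positive finite measure. -/
def BallRegular {Y : Type*} [PseudoMetricSpace Y] [MeasurableSpace Y]
    (m : Measure Y) : Prop :=
  ∀ (x : Y) (r : ℝ), 0 < r → 0 < m (Metric.ball x r) ∧ m (Metric.ball x r) < ⊤

/-- The measure `m` is (globally) doubling. -/
def DoublingMeasure' {Y : Type*} [PseudoMetricSpace Y] [MeasurableSpace Y]
    (m : Measure Y) : Prop :=
  ∃ C : ℝ≥0, 0 < C ∧ ∀ (x : Y) (r : ℝ), 0 < r →
    m (Metric.ball x (2 * r)) ≤ C * m (Metric.ball x r)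

/-- `(Y, m)` supports a `p`-Poincaré inequality. -/
def PoincareInequality {Y : Type*} [MetricSpace Y] [MeasurableSpace Y]
    (m : Measure Y) (p : ℝ) : Prop :=
  ∃ C lam : ℝ, 0 < C ∧ 1 ≤ lam ∧
    ∀ (x : Y) (r : ℝ), 0 < r → ∀ f : Y → ℝ, Integrable f m →
      ∀ g : Y → ℝ≥0∞, Measurable g →
        IsUpperGradientOn (Set.univ : Set Y) g (fun y => (f y : EReal)) →
        ENNReal.ofReal (⨍ y in Metric.ball x r,
            |f y - ⨍ z in Metric.ball x r, f z ∂m| ∂m) ≤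
          ENNReal.ofReal (C * Metric.diam (Metric.ball x r)) *
            ((∫⁻ y in Metric.ball x (lam * r), g y ^ p ∂m) /
              m (Metric.ball x (lam * r))) ^ (1 / p)

/-! ### Auxiliary lemmas -/

lemma erealAbs_coe (r : ℝ) : erealAbs (r : EReal) = ENNReal.ofReal |r| := by
  simp [erealAbs]

lemma erealAbs_coe_sub (a b : ℝ) :
    erealAbs ((a : EReal) - (b : EReal)) = ENNReal.ofReal |a - b| := by
  rw [← EReal.coe_sub, erealAbs_coe]

lemma upgrad_post {Y : Type*} {ρ : Y → Y → ℝ≥0∞} {S : Set Y} {g : Y → ℝ≥0∞}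
    {f : Y → ℝ} {φ : ℝ → ℝ} (hφ : ∀ a b : ℝ, |φ a - φ b| ≤ |a - b|)
    (h : IsUpperGradientWith ρ S g (fun y => (f y : EReal))) :
    IsUpperGradientWith ρ S g (fun y => (φ (f y) : EReal)) := by
  intro γ L hL hM hA
  have h' := h γ L hL hM hA
  rw [erealAbs_coe_sub] at h' ⊢
  exact le_trans (ENNReal.ofReal_le_ofReal (hφ _ _)) h'

lemma upgrad_add {Y : Type*} {ρ : Y → Y → ℝ≥0∞} {S : Set Y}
    {g₁ g₂ : Y → ℝ≥0∞} {f₁ f₂ : Y → ℝ}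
    (h₁ : IsUpperGradientWith ρ S g₁ (fun y => (f₁ y : EReal)))
    (h₂ : IsUpperGradientWith ρ S g₂ (fun y => (f₂ y : EReal))) :
    IsUpperGradientWith ρ S (fun y => g₁ y + g₂ y)
      (fun y => ((f₁ y + f₂ y : ℝ) : EReal)) := by
  intro γ L hL hM hA
  have h₁' := h₁ γ L hL hM hA
  have h₂' := h₂ γ L hL hM hA
  rw [erealAbs_coe_sub] at h₁' h₂' ⊢
  calc ENNReal.ofReal |f₁ (γ L) + f₂ (γ L) - (f₁ (γ 0) + f₂ (γ 0))|
      ≤ ENNReal.ofReal (|f₁ (γ L) - f₁ (γ 0)| + |f₂ (γ L) - f₂ (γ 0)|) := by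
        apply ENNReal.ofReal_le_ofReal; rw [add_sub_add_comm]; exact abs_add_le _ _
    _ = ENNReal.ofReal |f₁ (γ L) - f₁ (γ 0)| + ENNReal.ofReal |f₂ (γ L) - f₂ (γ 0)| :=
        ENNReal.ofReal_add (abs_nonneg _) (abs_nonneg _)
    _ ≤ (∫⁻ t in Set.Icc 0 L, g₁ (γ t)) + ∫⁻ t in Set.Icc 0 L, g₂ (γ t) :=
        add_le_add h₁' h₂'
    _ ≤ ∫⁻ t in Set.Icc 0 L, (g₁ (γ t) + g₂ (γ t)) := le_lintegral_add _ _

lemma upgrad_smul {Y : Type*} {ρ : Y → Y → ℝ≥0∞} {S : Set Y}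
    {g : Y → ℝ≥0∞} {f : Y → ℝ} {c : ℝ} (hc : 0 ≤ c)
    (h : IsUpperGradientWith ρ S g (fun y => (f y : EReal))) :
    IsUpperGradientWith ρ S (fun y => ENNReal.ofReal c * g y)
      (fun y => ((c * f y : ℝ) : EReal)) := by
  intro γ L hL hM hA
  have h' := h γ L hL hM hA
  rw [erealAbs_coe_sub] at h' ⊢
  rw [← mul_sub, abs_mul, abs_of_nonneg hc,
    ENNReal.ofReal_mul hc, lintegral_const_mul' _ _ ENNReal.ofReal_ne_top]
  exact mul_le_mul_right h' _

lemma rpow_invp_rpow (x : ℝ≥0∞) {p : ℝ} (hp : p ≠ 0) : (x ^ (1/p)) ^ p = x := by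
  rw [← ENNReal.rpow_mul, one_div, inv_mul_cancel₀ hp, ENNReal.rpow_one]

lemma lp_add_bound {Y : Type*} [MeasurableSpace Y] (m : Measure Y) {p : ℝ} (hp : 1 ≤ p)
    {F G : Y → ℝ≥0∞} (hF : AEMeasurable F m) (hG : AEMeasurable G m) :
    ∫⁻ y, (F y + G y) ^ p ∂m ≤
      ((∫⁻ y, F y ^ p ∂m) ^ (1/p) + (∫⁻ y, G y ^ p ∂m) ^ (1/p)) ^ p := by
  have hp0 : p ≠ 0 := by positivity
  have h := ENNReal.lintegral_Lp_add_le hF hG hp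
  calc ∫⁻ y, (F y + G y) ^ p ∂m
      = ((∫⁻ y, (F y + G y) ^ p ∂m) ^ (1/p)) ^ p := (rpow_invp_rpow _ hp0).symm
    _ ≤ _ := ENNReal.rpow_le_rpow h (by linarith)


/-! ### Statement 6 -/

theorem statement6 {X : Type*} [MetricSpace X] [MeasurableSpace X] [BorelSpace X]
    (μ : Measure X) (hμc : μ.IsComplete) (hball : BallRegular μ)
    (Ω : Set X) (hΩo : IsOpen Ω) (hΩne : Ω.Nonempty) (p : ℝ) (hp : 1 ≤ p)
    (hqc : ∀ u : X → ℝ, MemNp μ p Ω u → ∀ ε : ℝ≥0∞, 0 < ε →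
      ∃ U : Set X, U ⊆ Ω ∧ IsOpen U ∧ CpOn μ p Ω U < ε ∧ ContinuousOn u (Ω \ U)) :
    ∀ E : Set X, E ⊆ closure Ω →
      bCpOn μ p Ω E =
        ⨅ G ∈ {G : Set X | E ⊆ G ∧ ∃ V : Set X, IsOpen V ∧ G = V ∩ closure Ω},
          bCpOn μ p Ω G := by
  intro E hE
  have hp0 : (0:ℝ) ≤ p := by linarith
  have hpne : p ≠ 0 := by positivity
  have hp1 : (0:ℝ) ≤ 1/p := by positivity
  apply le_antisymm
  · -- easy direction: monotonicity
    refine le_iInf₂ fun G hG => ?_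
    unfold bCpOn
    refine le_iInf₂ fun u hu => ?_
    refine iInf₂_le u ⟨hu.1, fun x hx => hu.2.1 x ⟨hG.1 hx.1, hx.2⟩,
      fun x hx => hu.2.2 x ⟨hG.1 hx.1, hx.2⟩⟩
  · -- hard direction
    rw [bCpOn]
    refine le_iInf₂ fun u hu => ?_
    obtain ⟨⟨humeas, huen⟩, huge, huliminf⟩ := hu
    set u' : X → ℝ := fun x => max (u x) 0 with hu'def
    have hu'meas : Measurable u' := humeas.max measurable_const
    have hmaxlip : ∀ a b : ℝ, |max a 0 - max b 0| ≤ |a - b| :=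
      fun a b => abs_max_sub_max_le_abs a b 0
    set a : ℝ≥0∞ := ∫⁻ y in Ω, ENNReal.ofReal |u' y| ^ p ∂μ with hadef
    set b : ℝ≥0∞ := ⨅ g ∈ {g : X → ℝ≥0∞ | Measurable g ∧
        IsUpperGradientWith (fun x y => edist x y) Ω g (fun y => (u' y : EReal))},
      ∫⁻ y in Ω, g y ^ p ∂μ with hbdef
    have henu' : npEnergyOn μ p Ω u' = a + b := rfl
    have hab : a + b ≤ npEnergyOn μ p Ω u := by
      rw [npEnergyOn, npEnergyWith]
      refine add_le_add ?_ ?_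
      · refine lintegral_mono fun y => ?_
        refine ENNReal.rpow_le_rpow (ENNReal.ofReal_le_ofReal ?_) hp0
        simpa using hmaxlip (u y) 0
      · exact le_iInf₂ fun g hg => iInf₂_le g ⟨hg.1, upgrad_post hmaxlip hg.2⟩
    have habne : a + b ≠ ⊤ := (lt_of_le_of_lt hab (lt_top_iff_ne_top.2 huen)).ne
    have ha : a ≠ ⊤ := (ENNReal.add_ne_top.1 habne).1
    have hb : b ≠ ⊤ := (ENNReal.add_ne_top.1 habne).2
    have hu'mem : MemNp μ p Ω u' := ⟨hu'meas, by rw [henu']; exact habne⟩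
    have hu'ge : ∀ x ∈ E ∩ Ω, 1 ≤ u' x := fun x hx =>
      le_trans (huge x hx) (le_max_left _ _)
    have hu'liminf : ∀ x ∈ E ∩ (closure Ω \ Ω),
        (1 : EReal) ≤ Filter.liminf (fun y => (u' y : EReal)) (nhdsWithin x Ω) := by
      intro x hx
      refine le_trans (huliminf x hx) (Filter.liminf_le_liminf ?_)
      exact Filter.Eventually.of_forall fun y => EReal.coe_le_coe_iff.2 (le_max_left _ _)
    -- the key estimate, for each 0 < δ < 1
    have key : ∀ δ : ℝ, 0 < δ → δ < 1 →
        (⨅ G ∈ {G : Set X | E ⊆ G ∧ ∃ V : Set X, IsOpen V ∧ G = V ∩ closure Ω},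
            bCpOn μ p Ω G) ≤
          ENNReal.ofReal ((1 - δ)⁻¹) ^ p *
            ((a ^ (1/p) + ENNReal.ofReal δ ^ (1/p)) ^ p +
              ((b + ENNReal.ofReal δ) ^ (1/p) + ENNReal.ofReal δ ^ (1/p)) ^ p) := by
      intro δ hδ0 hδ1
      set ε : ℝ≥0∞ := ENNReal.ofReal δ with hεdef
      have hε0 : 0 < ε := ENNReal.ofReal_pos.2 hδ0
      have hεne : ε ≠ ⊤ := ENNReal.ofReal_ne_top
      obtain ⟨U, hUΩ, hUopen, hUcap, hucont⟩ := hqc u' hu'mem ε hε0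
      -- a nearly admissible function for `U` with small energy
      rw [CpOn] at hUcap
      obtain ⟨v, hv⟩ := iInf_lt_iff.1 hUcap
      obtain ⟨⟨⟨hvmeas, hven'⟩, hvU⟩, hvlt⟩ := iInf_lt_iff.1 hv
      rw [npEnergyOn, npEnergyWith] at hvlt
      have hvLp0 : (∫⁻ y in Ω, ENNReal.ofReal |v y| ^ p ∂μ) < ε :=
        lt_of_le_of_lt le_self_add hvlt
      have hvginf : (⨅ g ∈ {g : X → ℝ≥0∞ | Measurable g ∧
          IsUpperGradientWith (fun x y => edist x y) Ω g (fun y => (v y : EReal))},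
          ∫⁻ y in Ω, g y ^ p ∂μ) < ε := lt_of_le_of_lt le_add_self hvlt
      obtain ⟨gv, hgv⟩ := iInf_lt_iff.1 hvginf
      obtain ⟨hgvmem, hgvlt⟩ := iInf_lt_iff.1 hgv
      set v' : X → ℝ := fun x => max (v x) 0 with hv'def
      have hv'meas : Measurable v' := hvmeas.max measurable_const
      -- a good upper gradient for u'
      have hbε : b < b + ε := ENNReal.lt_add_right hb hε0.ne'
      rw [hbdef] at hbε
      obtain ⟨gu, hgu0⟩ := iInf_lt_iff.1 hbε
      obtain ⟨hgumem, hgult⟩ := iInf_lt_iff.1 hgu0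
      rw [← hbdef] at hgult
      -- open set from quasicontinuity
      obtain ⟨V', hV'open, hV'eq⟩ := (_root_.continuousOn_iff'.1 hucont) (Set.Ioi (1-δ)) isOpen_Ioi
      -- neighborhoods of boundary points
      have hbd : ∀ x ∈ E ∩ (closure Ω \ Ω), ∃ N : Set X, IsOpen N ∧ x ∈ N ∧
          ∀ y ∈ N ∩ Ω, 1 - δ < u' y := by
        intro x hx
        have h1 := hu'liminf x hx
        have hlt : ((1 - δ : ℝ) : EReal) <
            Filter.liminf (fun y => (u' y : EReal)) (nhdsWithin x Ω) := by
          refine lt_of_lt_of_le ?_ h1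
          exact_mod_cast (by linarith : (1 - δ : ℝ) < 1)
        have hev := Filter.eventually_lt_of_lt_liminf hlt
        obtain ⟨N, hNopen, hNx, hNsub⟩ := mem_nhdsWithin.1 hev
        exact ⟨N, hNopen, hNx, fun y hy => EReal.coe_lt_coe_iff.1 (hNsub hy)⟩
      choose N hNopen hNmem hNlt using hbd
      set W : Set X := ⋃ x, ⋃ (hx : x ∈ E ∩ (closure Ω \ Ω)), N x hx with hWdef
      have hWopen : IsOpen W := isOpen_iUnion fun x => isOpen_iUnion fun hx => hNopen x hx
      set V : Set X := U ∪ (V' ∩ Ω) ∪ W with hVdef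
      have hVopen : IsOpen V := (hUopen.union (hV'open.inter hΩo)).union hWopen
      have hEG : E ⊆ V ∩ closure Ω := by
        intro x hx
        refine ⟨?_, hE hx⟩
        by_cases hxΩ : x ∈ Ω
        · by_cases hxU : x ∈ U
          · exact Or.inl (Or.inl hxU)
          · have hx1 : x ∈ u' ⁻¹' Set.Ioi (1-δ) ∩ (Ω \ U) :=
              ⟨Set.mem_preimage.2 (Set.mem_Ioi.2
                (lt_of_lt_of_le (by linarith) (hu'ge x ⟨hx, hxΩ⟩))), hxΩ, hxU⟩
            rw [hV'eq] at hx1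
            exact Or.inl (Or.inr ⟨hx1.1, hxΩ⟩)
        · have hxb : x ∈ E ∩ (closure Ω \ Ω) := ⟨hx, hE hx, hxΩ⟩
          exact Or.inr (Set.mem_iUnion.2 ⟨x, Set.mem_iUnion.2 ⟨hxb, hNmem x hxb⟩⟩)
      -- the competitor function w
      have h1δ : (0:ℝ) < 1 - δ := by linarith
      set c₀ : ℝ := (1 - δ)⁻¹ with hc₀def
      have hc₀0 : (0:ℝ) ≤ c₀ := le_of_lt (by positivity)
      set w : X → ℝ := fun x => c₀ * (u' x + v' x) with hwdef
      have hv'0 : ∀ x, 0 ≤ v' x := fun x => le_max_right _ _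
      have hu'0 : ∀ x, 0 ≤ u' x := fun x => le_max_right _ _
      have hwkey : ∀ x, 1 - δ ≤ u' x + v' x → 1 ≤ w x := by
        intro x hx
        have h2 := mul_le_mul_of_nonneg_left hx hc₀0
        rw [hc₀def, inv_mul_cancel₀ h1δ.ne'] at h2
        exact h2
      have hwge : ∀ x ∈ (V ∩ closure Ω) ∩ Ω, 1 ≤ w x := by
        rintro x ⟨⟨hxV, -⟩, hxΩ⟩
        refine hwkey x ?_
        have hUcase : x ∈ U → 1 - δ ≤ u' x + v' x := by
          intro hxU
          have hvx : v' x = 1 := by rw [hv'def]; simp [hvU x hxU]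
          have := hu'0 x; rw [hvx]; linarith
        rcases hxV with (hxU | hxV') | hxW
        · exact hUcase hxU
        · by_cases hxU : x ∈ U
          · exact hUcase hxU
          · have hx1 : x ∈ V' ∩ (Ω \ U) := ⟨hxV'.1, hxΩ, hxU⟩
            rw [← hV'eq] at hx1
            have h3 : 1 - δ < u' x := hx1.1
            have := hv'0 x; linarith
        · obtain ⟨x', hx'⟩ := Set.mem_iUnion.1 hxW
          obtain ⟨hx'mem, hxN⟩ := Set.mem_iUnion.1 hx'
          have h3 := hNlt x' hx'mem x ⟨hxN, hxΩ⟩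
          have := hv'0 x; linarith
      have hwliminf : ∀ x ∈ (V ∩ closure Ω) ∩ (closure Ω \ Ω),
          (1 : EReal) ≤ Filter.liminf (fun y => (w y : EReal)) (nhdsWithin x Ω) := by
        rintro x ⟨⟨hxV, -⟩, -, hxΩ⟩
        rcases hxV with (hxU | hxV') | hxW
        · exact absurd (hUΩ hxU) hxΩ
        · exact absurd hxV'.2 hxΩ
        · obtain ⟨x', hx'⟩ := Set.mem_iUnion.1 hxW
          obtain ⟨hx'mem, hxN⟩ := Set.mem_iUnion.1 hx'
          refine Filter.le_liminf_of_le (by isBoundedDefault) ?_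
          have hNn : N x' hx'mem ∈ nhdsWithin x Ω :=
            mem_nhdsWithin_of_mem_nhds ((hNopen x' hx'mem).mem_nhds hxN)
          filter_upwards [hNn, self_mem_nhdsWithin] with y hyN hyΩ
          have h1 : 1 - δ < u' y := hNlt x' hx'mem y ⟨hyN, hyΩ⟩
          have h2 : (1:ℝ) ≤ w y := hwkey y (by linarith [hv'0 y])
          exact_mod_cast h2
      -- energy estimates
      have haeq : (∫⁻ y in Ω, ENNReal.ofReal (u' y) ^ p ∂μ) = a := by
        rw [hadef]
        exact lintegral_congr fun y => by rw [abs_of_nonneg (hu'0 y)]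
      have hvLp : (∫⁻ y in Ω, ENNReal.ofReal (v' y) ^ p ∂μ) ≤ ε := by
        refine le_trans (lintegral_mono fun y => ?_) hvLp0.le
        exact ENNReal.rpow_le_rpow
          (ENNReal.ofReal_le_ofReal (max_le (le_abs_self _) (abs_nonneg _))) hp0
      set c : ℝ≥0∞ := ENNReal.ofReal c₀ with hcdef
      have hcne : c ^ p ≠ ⊤ := (ENNReal.rpow_lt_top_of_nonneg hp0 ENNReal.ofReal_ne_top).ne
      have hLpw : (∫⁻ y in Ω, ENNReal.ofReal |w y| ^ p ∂μ) ≤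
          c ^ p * (a ^ (1/p) + ε ^ (1/p)) ^ p := by
        have heq : ∀ y : X, ENNReal.ofReal |w y| ^ p =
            c ^ p * (ENNReal.ofReal (u' y) + ENNReal.ofReal (v' y)) ^ p := by
          intro y
          have h0 : 0 ≤ u' y + v' y := by linarith [hu'0 y, hv'0 y]
          show ENNReal.ofReal |c₀ * (u' y + v' y)| ^ p = _
          rw [abs_of_nonneg (mul_nonneg hc₀0 h0), ENNReal.ofReal_mul hc₀0,
            ENNReal.ofReal_add (hu'0 y) (hv'0 y), ENNReal.mul_rpow_of_nonneg _ _ hp0]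
        calc (∫⁻ y in Ω, ENNReal.ofReal |w y| ^ p ∂μ)
            = c ^ p * ∫⁻ y in Ω,
                (ENNReal.ofReal (u' y) + ENNReal.ofReal (v' y)) ^ p ∂μ := by
              simp_rw [heq]; rw [lintegral_const_mul' _ _ hcne]
          _ ≤ c ^ p * ((a ^ (1/p) + ε ^ (1/p)) ^ p) := by
              refine mul_le_mul_right ?_ _
              refine le_trans (lp_add_bound _ hp
                (ENNReal.measurable_ofReal.comp hu'meas).aemeasurable
                (ENNReal.measurable_ofReal.comp hv'meas).aemeasurable) ?_
              rw [haeq]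
              gcongr
      have hguv' : IsUpperGradientWith (fun x y => edist x y) Ω
          (fun y => c * (gu y + gv y)) (fun y => (w y : EReal)) := by
        have h1 := upgrad_add hgumem.2 (upgrad_post hmaxlip hgvmem.2)
        exact upgrad_smul hc₀0 h1
      have hgradw : (⨅ g ∈ {g : X → ℝ≥0∞ | Measurable g ∧
          IsUpperGradientWith (fun x y => edist x y) Ω g (fun y => (w y : EReal))},
          ∫⁻ y in Ω, g y ^ p ∂μ) ≤ c ^ p * ((b + ε) ^ (1/p) + ε ^ (1/p)) ^ p := by
        refine le_trans (iInf₂_le (fun y => c * (gu y + gv y))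
          ⟨(hgumem.1.add hgvmem.1).const_mul _, hguv'⟩) ?_
        calc (∫⁻ y in Ω, (c * (gu y + gv y)) ^ p ∂μ)
            = c ^ p * ∫⁻ y in Ω, (gu y + gv y) ^ p ∂μ := by
              simp_rw [ENNReal.mul_rpow_of_nonneg _ _ hp0]
              rw [lintegral_const_mul' _ _ hcne]
          _ ≤ c ^ p * ((b + ε) ^ (1/p) + ε ^ (1/p)) ^ p := by
              refine mul_le_mul_right ?_ _
              refine le_trans (lp_add_bound _ hp hgumem.1.aemeasurable
                hgvmem.1.aemeasurable) ?_
              gcongr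
      have hwen : npEnergyOn μ p Ω w ≤ c ^ p *
          ((a ^ (1/p) + ε ^ (1/p)) ^ p + ((b + ε) ^ (1/p) + ε ^ (1/p)) ^ p) := by
        rw [npEnergyOn, npEnergyWith, mul_add]
        exact add_le_add hLpw hgradw
      have hΦne : c ^ p *
          ((a ^ (1/p) + ε ^ (1/p)) ^ p + ((b + ε) ^ (1/p) + ε ^ (1/p)) ^ p) ≠ ⊤ := by
        refine ENNReal.mul_ne_top hcne (ENNReal.add_ne_top.2 ⟨?_, ?_⟩)
        · exact (ENNReal.rpow_lt_top_of_nonneg hp0 (ENNReal.add_ne_top.2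
            ⟨(ENNReal.rpow_lt_top_of_nonneg hp1 ha).ne,
             (ENNReal.rpow_lt_top_of_nonneg hp1 hεne).ne⟩)).ne
        · exact (ENNReal.rpow_lt_top_of_nonneg hp0 (ENNReal.add_ne_top.2
            ⟨(ENNReal.rpow_lt_top_of_nonneg hp1 (ENNReal.add_ne_top.2 ⟨hb, hεne⟩)).ne,
             (ENNReal.rpow_lt_top_of_nonneg hp1 hεne).ne⟩)).ne
      have hwmem : MemNp μ p Ω w :=
        ⟨(hu'meas.add hv'meas).const_mul c₀, ne_top_of_le_ne_top hΦne hwen⟩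
      refine le_trans (iInf₂_le (V ∩ closure Ω) ⟨hEG, V, hVopen, rfl⟩) ?_
      refine le_trans ?_ hwen
      rw [bCpOn]
      exact iInf₂_le w ⟨hwmem, hwge, hwliminf⟩

    -- pass to the limit δ → 0
    have hδn0 : ∀ n : ℕ, (0:ℝ) < ((n:ℝ)+2)⁻¹ := fun n => by positivity
    have hδn1 : ∀ n : ℕ, ((n:ℝ)+2)⁻¹ < 1 := fun n => by
      rw [inv_lt_one_iff₀]; right; push_cast; linarith [Nat.cast_nonneg (α := ℝ) n]
    have htδ : Filter.Tendsto (fun n : ℕ => ((n:ℝ)+2)⁻¹) atTop (𝓝 0) :=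
      Filter.Tendsto.inv_tendsto_atTop
        (Filter.tendsto_atTop_add_const_right _ 2 tendsto_natCast_atTop_atTop)
    have hte : Filter.Tendsto (fun n : ℕ => ENNReal.ofReal (((n:ℝ)+2)⁻¹)) atTop (𝓝 0) := by
      have := (ENNReal.continuous_ofReal.tendsto 0).comp htδ
      simpa [Function.comp_def] using this
    have htc : Filter.Tendsto (fun n : ℕ => ENNReal.ofReal ((1 - ((n:ℝ)+2)⁻¹)⁻¹) ^ p)
        atTop (𝓝 1) := by
      have h1 : Filter.Tendsto (fun n : ℕ => (1 - ((n:ℝ)+2)⁻¹)⁻¹) atTop (𝓝 1) := by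
        have := (tendsto_const_nhds (x := (1:ℝ)) (f := atTop (α := ℕ))).sub htδ
        rw [sub_zero] at this
        simpa using this.inv₀ (by norm_num)
      have h2 := (ENNReal.continuous_ofReal.tendsto 1).comp h1
      rw [ENNReal.ofReal_one] at h2
      have h3 := ((ENNReal.continuous_rpow_const (y := p)).tendsto 1).comp h2
      simpa [ENNReal.one_rpow, Function.comp_def] using h3
    have hteps : Filter.Tendsto (fun n : ℕ => ENNReal.ofReal (((n:ℝ)+2)⁻¹) ^ (1/p))
        atTop (𝓝 0) := by
      have h := ((ENNReal.continuous_rpow_const (y := 1/p)).tendsto 0).comp hte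
      rw [show ((0:ℝ≥0∞) ^ (1/p)) = 0 from ENNReal.zero_rpow_of_pos (by positivity)] at h
      exact h
    have htP : Filter.Tendsto
        (fun n : ℕ => (a ^ (1/p) + ENNReal.ofReal (((n:ℝ)+2)⁻¹) ^ (1/p)) ^ p)
        atTop (𝓝 a) := by
      have h1 := (tendsto_const_nhds (x := a ^ (1/p)) (f := atTop (α := ℕ))).add hteps
      rw [add_zero] at h1
      have h2 := ((ENNReal.continuous_rpow_const (y := p)).tendsto (a ^ (1/p))).comp h1
      rw [rpow_invp_rpow _ hpne] at h2
      exact h2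
    have htQ : Filter.Tendsto
        (fun n : ℕ => ((b + ENNReal.ofReal (((n:ℝ)+2)⁻¹)) ^ (1/p) +
          ENNReal.ofReal (((n:ℝ)+2)⁻¹) ^ (1/p)) ^ p)
        atTop (𝓝 b) := by
      have h0 := (tendsto_const_nhds (x := b) (f := atTop (α := ℕ))).add hte
      rw [add_zero] at h0
      have h1 := ((ENNReal.continuous_rpow_const (y := 1/p)).tendsto b).comp h0
      have h2 := h1.add hteps
      rw [add_zero] at h2
      have h3 := ((ENNReal.continuous_rpow_const (y := p)).tendsto (b ^ (1/p))).comp h2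
      rw [rpow_invp_rpow _ hpne] at h3
      exact h3
    have hmul : Filter.Tendsto
        (fun n : ℕ => ENNReal.ofReal ((1 - ((n:ℝ)+2)⁻¹)⁻¹) ^ p *
          ((a ^ (1/p) + ENNReal.ofReal (((n:ℝ)+2)⁻¹) ^ (1/p)) ^ p +
            ((b + ENNReal.ofReal (((n:ℝ)+2)⁻¹)) ^ (1/p) +
              ENNReal.ofReal (((n:ℝ)+2)⁻¹) ^ (1/p)) ^ p))
        atTop (𝓝 (a + b)) := by
      have := ENNReal.Tendsto.mul htc (Or.inr habne) (htP.add htQ) (Or.inr ENNReal.one_ne_top)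
      simpa using this
    have hfin : (⨅ G ∈ {G : Set X | E ⊆ G ∧ ∃ V : Set X, IsOpen V ∧ G = V ∩ closure Ω},
        bCpOn μ p Ω G) ≤ a + b :=
      ge_of_tendsto' hmul fun n => key _ (hδn0 n) (hδn1 n)
    exact hfin.trans hab


end
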